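/- arXiv:1112.3012 — 2 statements merged into one kernel-verified Lean document; each statement's English description precedes it below -/
import Mathlib

section
/- Suppose g : (0,∞) → [0,∞) satisfies sup_{x>0} x²|g''(x)| < ∞. Let V₀(S,t) = e^{−r(T−t)} E[g(S · e^{σ(Z_T − Z_t) + (r − σ²/2)(T−t)})] where Z is a standard Brownian motion (risk-neutral Black-Scholes price). Then for all S > 0 and t ∈ [0,T], |S² ∂²V₀/∂S²(S,t)| ≤ sup_{x>0} x²|g''(x)|. -/
open Real MeasureTheory ProbabilityTheory
open scoped NNReal ENNReal

open Metric

lemma integrable_exp_mul_gaussian (c : ℝ) (v : ℝ≥0) :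
    Integrable (fun z => Real.exp (c * z)) (gaussianReal 0 v) := by
  rcases eq_or_ne v 0 with hv | hv
  · rw [hv, gaussianReal_zero_var]
    have hm : Measurable (fun z => Real.exp (c * z)) :=
      measurable_exp.comp (measurable_const.mul measurable_id)
    refine ⟨hm.aestronglyMeasurable, ?_⟩
    unfold HasFiniteIntegral
    rw [lintegral_dirac' _ hm.enorm]
    exact enorm_lt_top
  · rw [gaussianReal_of_var_ne_zero _ hv]
    rw [integrable_withDensity_iff (measurable_gaussianPDF 0 v) (by
      refine ae_of_all _ fun x => ?_
      exact ENNReal.ofReal_lt_top)]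
    have hvpos : (0:ℝ) < v := by positivity
    have key : ∀ z : ℝ, |Real.exp (c * z) * ((gaussianPDF 0 v z).toReal)|
        ≤ ((Real.sqrt (2 * π * v))⁻¹ * Real.exp (c ^ 2 * v)) * Real.exp (-(1/(4*v)) * z ^ 2) := by
      intro z
      rw [gaussianPDF, ENNReal.toReal_ofReal (gaussianPDFReal_nonneg 0 v z)]
      have hnn : (0:ℝ) ≤ Real.exp (c*z) * gaussianPDFReal 0 v z :=
        mul_nonneg (Real.exp_pos _).le (gaussianPDFReal_nonneg 0 v z)
      rw [abs_of_nonneg hnn, gaussianPDFReal]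
      rw [mul_comm (Real.exp (c*z)), mul_assoc ((Real.sqrt (2*π*(v:ℝ)))⁻¹), ← Real.exp_add,
        mul_assoc ((Real.sqrt (2*π*(v:ℝ)))⁻¹), ← Real.exp_add]
      have hexp : -(z-0)^2/(2*(v:ℝ)) + c*z ≤ c^2*(v:ℝ) + -(1/(4*(v:ℝ)))*z^2 := by
        have key2 : -(z-0)^2/(2*(v:ℝ)) + c*z - (c^2*(v:ℝ) + -(1/(4*(v:ℝ)))*z^2)
            = -(((z-2*c*(v:ℝ))^2)/(4*(v:ℝ))) := by
          field_simp
          ring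
        have h3 : (0:ℝ) ≤ ((z-2*c*(v:ℝ))^2)/(4*(v:ℝ)) := by positivity
        linarith
      exact mul_le_mul_of_nonneg_left (Real.exp_le_exp.2 hexp) (inv_nonneg.2 (Real.sqrt_nonneg _))
    refine Integrable.mono' ?_ ?_ (ae_of_all _ key)
    · exact (integrable_exp_neg_mul_sq (by positivity : (0:ℝ) < 1/(4*v))).const_mul _
    · exact ((measurable_exp.comp (measurable_const.mul measurable_id)).mul
        ((measurable_gaussianPDF 0 v).ennreal_toReal)).aestronglyMeasurable


lemma growth_bounds (g : ℝ → ℝ) (hg : ContDiffOn ℝ 2 g (Set.Ioi 0))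
    (M : ℝ) (hM : ∀ x > 0, x ^ 2 * |deriv (deriv g) x| ≤ M) :
    ∃ K : ℝ, 0 ≤ K ∧ (∀ x > 0, |deriv g x| ≤ K * (x + (x⁻¹) ^ 2 + 1)) ∧
      (∀ x > 0, |g x| ≤ K * (x ^ 2 + (x⁻¹) ^ 2 + 1)) := by
  have hM0 : 0 ≤ M := le_trans (by positivity) (hM 1 one_pos)
  have hd2 : ∀ y > (0:ℝ), |deriv (deriv g) y| ≤ M / y ^ 2 := by
    intro y hy
    rw [le_div_iff₀ (by positivity)]
    calc |deriv (deriv g) y| * y ^ 2 = y ^ 2 * |deriv (deriv g) y| := by ring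
      _ ≤ M := hM y hy
  have hgdiff : ∀ x ∈ Set.Ioi (0:ℝ), DifferentiableAt ℝ g x := fun x hx =>
    (hg.differentiableOn (by norm_num)).differentiableAt (isOpen_Ioi.mem_nhds hx)
  have hg1 : ContDiffOn ℝ 1 (deriv g) (Set.Ioi 0) := by
    have := hg.deriv_of_isOpen (m := 1) isOpen_Ioi (by norm_num)
    simpa using this
  have hg'diff : ∀ x ∈ Set.Ioi (0:ℝ), DifferentiableAt ℝ (deriv g) x := fun x hx =>
    (hg1.differentiableOn one_ne_zero).differentiableAt (isOpen_Ioi.mem_nhds hx)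
  have hsub : ∀ x > (0:ℝ), Set.uIcc 1 x ⊆ Set.Ioi (0:ℝ) := by
    intro x hx y hy
    rw [Set.mem_uIcc] at hy
    have h1 : min 1 x ≤ y := by
      rcases hy with h | h
      · exact le_trans (min_le_left _ _) h.1
      · exact le_trans (min_le_right _ _) h.1
    exact lt_of_lt_of_le (lt_min one_pos hx) h1
  have hmem : ∀ x > (0:ℝ), ∀ y ∈ Set.uIcc 1 x, 0 < y ∧ y ≤ x + 1 ∧ (1 ≤ y ∨ x ≤ y) := by
    intro x hx y hy
    refine ⟨hsub x hx hy, ?_, ?_⟩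
    · rw [Set.mem_uIcc] at hy
      rcases hy with h | h
      · linarith [h.2]
      · linarith [h.2]
    · rw [Set.mem_uIcc] at hy
      rcases hy with h | h
      · exact Or.inl h.1
      · exact Or.inr h.1
  have key1 : ∀ x > (0:ℝ), |deriv g x - deriv g 1| ≤ (M + M / x ^ 2) * |x - 1| := by
    intro x hx
    have hb : ∀ y ∈ Set.uIcc 1 x, ‖deriv (deriv g) y‖ ≤ M + M / x ^ 2 := by
      intro y hy
      obtain ⟨hy0, _, hcase⟩ := hmem x hx y hy
      rw [Real.norm_eq_abs]
      have h1 := hd2 y hy0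
      have hx2 : (0:ℝ) ≤ M / x ^ 2 := by positivity
      rcases hcase with h | h
      · have : M / y ^ 2 ≤ M := by
          rw [div_le_iff₀ (by positivity)]
          nlinarith [mul_nonneg (mul_nonneg hM0 (sub_nonneg.2 h)) (by linarith : (0:ℝ) ≤ y + 1)]
        linarith
      · have : M / y ^ 2 ≤ M / x ^ 2 := by
          gcongr
        linarith
    have := Convex.norm_image_sub_le_of_norm_deriv_le
      (fun y hy => hg'diff y (hsub x hx hy)) hb (convex_uIcc 1 x)
      Set.left_mem_uIcc Set.right_mem_uIcc
    simpa [Real.norm_eq_abs] using this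
  set C₁ := |deriv g 1| with hC₁
  have hC₁0 : 0 ≤ C₁ := abs_nonneg _
  -- pointwise helper facts
  have hfacts : ∀ x > (0:ℝ), x ≤ x ^ 2 + 1 ∧ x⁻¹ ≤ (x⁻¹) ^ 2 + 1 ∧ |x - 1| ≤ x + 1 := by
    intro x hx
    refine ⟨by nlinarith, by nlinarith [sq_nonneg (x⁻¹ - 1)], abs_le.2 ⟨by linarith, by linarith⟩⟩
  have hKd : ∀ x > (0:ℝ), |deriv g x| ≤ (C₁ + 2 * M) * (x + (x⁻¹) ^ 2 + 1) := by
    intro x hx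
    obtain ⟨h1, h2, h3⟩ := hfacts x hx
    have hk := key1 x hx
    have habs : |deriv g x| ≤ C₁ + (M + M / x ^ 2) * |x - 1| := by
      have := abs_sub_abs_le_abs_sub (deriv g x) (deriv g 1)
      linarith
    have hinv : M / x ^ 2 = M * (x⁻¹) ^ 2 := by
      field_simp
    have hx1 : (0:ℝ) ≤ x⁻¹ := by positivity
    have hxx : x⁻¹ * x = 1 := inv_mul_cancel₀ (ne_of_gt hx)
    rw [hinv] at habs
    have e1 : (M + M * (x⁻¹) ^ 2) * |x - 1| ≤ (M + M * (x⁻¹) ^ 2) * (x + 1) :=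
      mul_le_mul_of_nonneg_left h3 (by positivity)
    have e2 : (M + M * (x⁻¹) ^ 2) * (x + 1) = M * x + M + M * x⁻¹ + M * (x⁻¹) ^ 2 := by
      field_simp
      ring
    have e3 : M * x⁻¹ ≤ M * ((x⁻¹) ^ 2 + 1) := mul_le_mul_of_nonneg_left h2 hM0
    nlinarith [mul_nonneg hC₁0 hx.le, mul_nonneg hC₁0 (sq_nonneg x⁻¹), mul_nonneg hM0 hx.le,
      mul_nonneg hM0 (sq_nonneg x⁻¹)]
  refine ⟨|g 1| + 8 * (C₁ + 2 * M), by positivity, ?_, ?_⟩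
  · intro x hx
    have hd := hKd x hx
    have h0 : (0:ℝ) ≤ x + (x⁻¹) ^ 2 + 1 := by positivity
    nlinarith [abs_nonneg (g 1), mul_nonneg (abs_nonneg (g 1)) h0,
      mul_nonneg (by positivity : (0:ℝ) ≤ 7 * (C₁ + 2 * M)) h0]
  · intro x hx
    obtain ⟨h1, h2, h3⟩ := hfacts x hx
    have key2 : |g x - g 1| ≤ ((C₁ + 2 * M) * ((x + 1) + ((x⁻¹) ^ 2 + 1) + 1)) * |x - 1| := by
      have hb : ∀ y ∈ Set.uIcc 1 x,
          ‖deriv g y‖ ≤ (C₁ + 2 * M) * ((x + 1) + ((x⁻¹) ^ 2 + 1) + 1) := by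
        intro y hy
        obtain ⟨hy0, hyx, hcase⟩ := hmem x hx y hy
        rw [Real.norm_eq_abs]
        have hd := hKd y hy0
        have hinvy : (y⁻¹) ^ 2 ≤ (x⁻¹) ^ 2 + 1 := by
          rcases hcase with h | h
          · have hy1 : y⁻¹ ≤ 1 := by
              rw [inv_le_one_iff₀]
              right; exact h
            have : (y⁻¹) ^ 2 ≤ 1 := by nlinarith [inv_pos.2 hy0]
            nlinarith [sq_nonneg x⁻¹]
          · have hxy : x⁻¹ ≥ y⁻¹ := by gcongr
            nlinarith [inv_pos.2 hy0, inv_pos.2 hx]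
        have hstep : y + (y⁻¹) ^ 2 + 1 ≤ (x + 1) + ((x⁻¹) ^ 2 + 1) + 1 := by linarith
        have := mul_le_mul_of_nonneg_left hstep (by positivity : (0:ℝ) ≤ C₁ + 2 * M)
        linarith
      have := Convex.norm_image_sub_le_of_norm_deriv_le
        (fun y hy => hgdiff y (hsub x hx hy)) hb (convex_uIcc 1 x)
        Set.left_mem_uIcc Set.right_mem_uIcc
      simpa [Real.norm_eq_abs] using this
    have habs : |g x| ≤ |g 1| + ((C₁ + 2 * M) * ((x + 1) + ((x⁻¹) ^ 2 + 1) + 1)) * |x - 1| := by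
      have := abs_sub_abs_le_abs_sub (g x) (g 1)
      linarith
    have e1 : ((C₁ + 2 * M) * ((x + 1) + ((x⁻¹) ^ 2 + 1) + 1)) * |x - 1|
        ≤ ((C₁ + 2 * M) * ((x + 1) + ((x⁻¹) ^ 2 + 1) + 1)) * (x + 1) :=
      mul_le_mul_of_nonneg_left h3 (by positivity)
    have e2 : ((C₁ + 2 * M) * ((x + 1) + ((x⁻¹) ^ 2 + 1) + 1)) * (x + 1)
        = (C₁ + 2 * M) * (x ^ 2 + 4 * x + x⁻¹ + (x⁻¹) ^ 2 + 3) := by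
      field_simp
      ring
    have e3 : x ^ 2 + 4 * x + x⁻¹ + (x⁻¹) ^ 2 + 3 ≤ 8 * (x ^ 2 + (x⁻¹) ^ 2 + 1) := by
      nlinarith [sq_nonneg x, sq_nonneg x⁻¹]
    have e4 : (C₁ + 2 * M) * (x ^ 2 + 4 * x + x⁻¹ + (x⁻¹) ^ 2 + 3)
        ≤ (C₁ + 2 * M) * (8 * (x ^ 2 + (x⁻¹) ^ 2 + 1)) :=
      mul_le_mul_of_nonneg_left e3 (by positivity)
    nlinarith [mul_nonneg (abs_nonneg (g 1)) (by positivity : (0:ℝ) ≤ x ^ 2 + (x⁻¹) ^ 2)]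


lemma main_derivs (ν : Measure ℝ) [IsProbabilityMeasure ν] (E : ℝ → ℝ)
    (hEpos : ∀ z, 0 < E z) (hEcont : Continuous E)
    (hi2 : Integrable (fun z => (E z) ^ 2) ν) (hi1 : Integrable E ν)
    (him1 : Integrable (fun z => (E z)⁻¹) ν)
    (him2 : Integrable (fun z => ((E z)⁻¹) ^ 2) ν)
    (g : ℝ → ℝ) (hg : ContDiffOn ℝ 2 g (Set.Ioi 0))
    (M : ℝ) (hM : ∀ x > 0, x ^ 2 * |deriv (deriv g) x| ≤ M)
    (s0 : ℝ) (hs0 : 0 < s0) :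
    HasDerivAt (fun s => ∫ z, g (s * E z) ∂ν) (∫ z, deriv g (s0 * E z) * E z ∂ν) s0 ∧
    HasDerivAt (fun s => ∫ z, deriv g (s * E z) * E z ∂ν)
      (∫ z, deriv (deriv g) (s0 * E z) * E z * E z ∂ν) s0 ∧
    Integrable (fun z => deriv (deriv g) (s0 * E z) * E z * E z) ν := by
  obtain ⟨K, hK0, hKd, hKg⟩ := growth_bounds g hg M hM
  have hM0 : 0 ≤ M := le_trans (by positivity) (hM 1 one_pos)
  have hd2 : ∀ y > (0:ℝ), |deriv (deriv g) y| ≤ M / y ^ 2 := by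
    intro y hy
    rw [le_div_iff₀ (by positivity)]
    calc |deriv (deriv g) y| * y ^ 2 = y ^ 2 * |deriv (deriv g) y| := by ring
      _ ≤ M := hM y hy
  have hgdiff : ∀ x ∈ Set.Ioi (0:ℝ), DifferentiableAt ℝ g x := fun x hx =>
    (hg.differentiableOn (by norm_num)).differentiableAt (isOpen_Ioi.mem_nhds hx)
  have hg1 : ContDiffOn ℝ 1 (deriv g) (Set.Ioi 0) := by
    have := hg.deriv_of_isOpen (m := 1) isOpen_Ioi (by norm_num)
    simpa using this
  have hg'diff : ∀ x ∈ Set.Ioi (0:ℝ), DifferentiableAt ℝ (deriv g) x := fun x hx =>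
    (hg1.differentiableOn one_ne_zero).differentiableAt (isOpen_Ioi.mem_nhds hx)
  have hc0 : ContinuousOn g (Set.Ioi 0) := hg.continuousOn
  have hc1 : ContinuousOn (deriv g) (Set.Ioi 0) := hg1.continuousOn
  have hc2 : ContinuousOn (deriv (deriv g)) (Set.Ioi 0) :=
    hg1.continuousOn_deriv_of_isOpen isOpen_Ioi le_rfl
  -- continuity of the compositions
  have hmul : ∀ s : ℝ, 0 < s → ∀ z, s * E z ∈ Set.Ioi (0:ℝ) :=
    fun s hs z => mul_pos hs (hEpos z)
  have hcomp0 : ∀ s : ℝ, 0 < s → Continuous (fun z => g (s * E z)) := fun s hs =>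
    hc0.comp_continuous (continuous_const.mul hEcont) (hmul s hs)
  have hcomp1 : ∀ s : ℝ, 0 < s → Continuous (fun z => deriv g (s * E z)) := fun s hs =>
    hc1.comp_continuous (continuous_const.mul hEcont) (hmul s hs)
  have hcomp2 : ∀ s : ℝ, 0 < s → Continuous (fun z => deriv (deriv g) (s * E z)) := fun s hs =>
    hc2.comp_continuous (continuous_const.mul hEcont) (hmul s hs)
  -- ball facts
  have hball : ∀ x ∈ ball s0 (s0/2), s0/2 ≤ x ∧ x ≤ 3*s0/2 ∧ 0 < x ∧ x⁻¹ ≤ 2/s0 := by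
    intro x hx
    rw [mem_ball, Real.dist_eq, abs_lt] at hx
    have h1 : s0/2 ≤ x := by linarith [hx.1]
    have h2 : x ≤ 3*s0/2 := by linarith [hx.2]
    have h3 : 0 < x := by linarith
    refine ⟨h1, h2, h3, ?_⟩
    have : x⁻¹ ≤ (s0/2)⁻¹ := by gcongr
    rwa [inv_div] at this
  -- step 1
  have step1 : Integrable (fun z => deriv g (s0 * E z) * E z) ν ∧
      HasDerivAt (fun s => ∫ z, g (s * E z) ∂ν) (∫ z, deriv g (s0 * E z) * E z ∂ν) s0 := by
    apply hasDerivAt_integral_of_dominated_loc_of_deriv_le (ball_mem_nhds s0 (half_pos hs0))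
      (F := fun s z => g (s * E z)) (F' := fun s z => deriv g (s * E z) * E z)
      (bound := fun z => K*(3*s0/2)*(E z)^2 + K*(2/s0)^2*(E z)⁻¹ + K*(E z))
    · filter_upwards [eventually_gt_nhds hs0] with s hs using
        (hcomp0 s hs).aestronglyMeasurable
    · -- integrability of z ↦ g (s0 * E z)
      refine Integrable.mono' (g := fun z =>
          K*s0^2*(E z)^2 + K*(s0⁻¹)^2*((E z)⁻¹)^2 + K) ?_ ?_ (ae_of_all _ ?_)
      · exact ((hi2.const_mul _).add (him2.const_mul _)).add (integrable_const K)
      · exact (hcomp0 s0 hs0).aestronglyMeasurable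
      · intro z
        have h := hKg (s0 * E z) (hmul s0 hs0 z)
        have he : K * ((s0 * E z)^2 + ((s0 * E z)⁻¹)^2 + 1)
            = K*s0^2*(E z)^2 + K*(s0⁻¹)^2*((E z)⁻¹)^2 + K := by
          rw [mul_inv]; ring
        rw [Real.norm_eq_abs]
        linarith [he ▸ h]
    · exact ((hcomp1 s0 hs0).mul hEcont).aestronglyMeasurable
    · refine ae_of_all _ fun z x hx => ?_
      obtain ⟨hxl, hxu, hx0, hxi⟩ := hball x hx
      have hy0 : 0 < x * E z := mul_pos hx0 (hEpos z)
      have hEz := hEpos z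
      calc ‖deriv g (x * E z) * E z‖ = |deriv g (x * E z)| * E z := by
            rw [norm_mul, Real.norm_eq_abs, Real.norm_eq_abs, abs_of_pos hEz]
        _ ≤ (K * ((x * E z) + ((x * E z)⁻¹)^2 + 1)) * E z :=
            mul_le_mul_of_nonneg_right (hKd _ hy0) hEz.le
        _ = K*x*(E z)^2 + K*(x⁻¹)^2*(E z)⁻¹ + K*(E z) := by
            field_simp
        _ ≤ K*(3*s0/2)*(E z)^2 + K*(2/s0)^2*(E z)⁻¹ + K*(E z) := by
            gcongr <;> positivity
    · exact ((hi2.const_mul _).add (him1.const_mul _)).add (hi1.const_mul _)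
    · refine ae_of_all _ fun z x hx => ?_
      obtain ⟨_, _, hx0, _⟩ := hball x hx
      exact (hgdiff _ (hmul x hx0 z)).hasDerivAt.comp x (hasDerivAt_mul_const (E z))
  -- step 2
  have step2 : Integrable (fun z => deriv (deriv g) (s0 * E z) * E z * E z) ν ∧
      HasDerivAt (fun s => ∫ z, deriv g (s * E z) * E z ∂ν)
        (∫ z, deriv (deriv g) (s0 * E z) * E z * E z ∂ν) s0 := by
    apply hasDerivAt_integral_of_dominated_loc_of_deriv_le (ball_mem_nhds s0 (half_pos hs0))
      (F := fun s z => deriv g (s * E z) * E z)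
      (F' := fun s z => deriv (deriv g) (s * E z) * E z * E z)
      (bound := fun _ => M * (2/s0)^2)
    · filter_upwards [eventually_gt_nhds hs0] with s hs using
        ((hcomp1 s hs).mul hEcont).aestronglyMeasurable
    · exact step1.1
    · exact (((hcomp2 s0 hs0).mul hEcont).mul hEcont).aestronglyMeasurable
    · refine ae_of_all _ fun z x hx => ?_
      obtain ⟨hxl, hxu, hx0, hxi⟩ := hball x hx
      have hy0 : 0 < x * E z := mul_pos hx0 (hEpos z)
      have hEz := hEpos z
      calc ‖deriv (deriv g) (x * E z) * E z * E z‖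
          = |deriv (deriv g) (x * E z)| * E z * E z := by
            simp [Real.norm_eq_abs, abs_mul, abs_of_pos hEz]
        _ ≤ (M / (x * E z)^2) * E z * E z := by
            gcongr
            exact hd2 _ hy0
        _ = M * (x⁻¹)^2 := by
            field_simp
        _ ≤ M * (2/s0)^2 := by gcongr
    · exact integrable_const _
    · refine ae_of_all _ fun z x hx => ?_
      obtain ⟨_, _, hx0, _⟩ := hball x hx
      exact (((hg'diff _ (hmul x hx0 z)).hasDerivAt.comp x
        (hasDerivAt_mul_const (E z))).mul_const (E z))
  exact ⟨step1.2, step2.2, step2.1⟩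


/-- the cash gamma of the Black-Scholes price of a claim is bounded by the
cash gamma of the payoff. -/
theorem stmt1 (T r σ : ℝ) (hT : 0 < T) (hr : 0 ≤ r) (hσ : 0 < σ)
    (g : ℝ → ℝ) (hg : ContDiffOn ℝ 2 g (Set.Ioi 0)) (hgnn : ∀ x > 0, 0 ≤ g x)
    (M : ℝ) (hM : ∀ x > 0, x ^ 2 * |deriv (deriv g) x| ≤ M)
    (V : ℝ → ℝ → ℝ)
    (hV : ∀ S t, 0 < S → t ∈ Set.Icc 0 T →
      V S t = Real.exp (-r * (T - t)) *
        ∫ z, g (S * Real.exp (σ * z + (r - σ ^ 2 / 2) * (T - t)))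
          ∂(gaussianReal 0 (Real.toNNReal (T - t)))) :
    ∀ S t, 0 < S → t ∈ Set.Icc 0 T →
      |S ^ 2 * deriv (deriv (fun s => V s t)) S| ≤ M := by
  intro S t hS ht
  have htT : t ≤ T := ht.2
  set ν : Measure ℝ := gaussianReal 0 (Real.toNNReal (T - t)) with hνdef
  set E : ℝ → ℝ := fun z => Real.exp (σ * z + (r - σ ^ 2 / 2) * (T - t)) with hEdef
  have hEpos : ∀ z, 0 < E z := fun z => Real.exp_pos _
  have hEcont : Continuous E := by
    rw [hEdef]
    exact Real.continuous_exp.comp ((continuous_const.mul continuous_id).add continuous_const)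
  have hEk : ∀ c : ℝ,
      Integrable (fun z => Real.exp (c * (σ * z + (r - σ ^ 2 / 2) * (T - t)))) ν := by
    intro c
    have h := (integrable_exp_mul_gaussian (c * σ) (Real.toNNReal (T - t))).const_mul
      (Real.exp (c * ((r - σ ^ 2 / 2) * (T - t))))
    refine h.congr (Filter.Eventually.of_forall fun z => ?_)
    beta_reduce
    rw [← Real.exp_add]
    ring_nf
  have hi2 : Integrable (fun z => (E z) ^ 2) ν := by
    refine (hEk 2).congr (Filter.Eventually.of_forall fun z => ?_)
    simp only [hEdef]
    rw [show ((2:ℝ):ℝ) = ((2:ℕ):ℝ) by norm_num, Real.exp_nat_mul]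
  have hi1 : Integrable E ν := by
    refine (hEk 1).congr (Filter.Eventually.of_forall fun z => ?_)
    simp only [hEdef]
    rw [one_mul]
  have him1 : Integrable (fun z => (E z)⁻¹) ν := by
    refine (hEk (-1)).congr (Filter.Eventually.of_forall fun z => ?_)
    simp only [hEdef]
    rw [neg_one_mul, Real.exp_neg]
  have him2 : Integrable (fun z => ((E z)⁻¹) ^ 2) ν := by
    refine (hEk (-2)).congr (Filter.Eventually.of_forall fun z => ?_)
    simp only [hEdef]
    rw [← Real.exp_neg, show (-2:ℝ) * (σ * z + (r - σ ^ 2 / 2) * (T - t))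
      = ((2:ℕ):ℝ) * (-(σ * z + (r - σ ^ 2 / 2) * (T - t))) by ring, Real.exp_nat_mul]
  have hder := fun s0 (hs0 : 0 < s0) =>
    main_derivs ν E hEpos hEcont hi2 hi1 him1 him2 g hg M hM s0 hs0
  set c : ℝ := Real.exp (-r * (T - t)) with hcdef
  have hc0 : 0 < c := Real.exp_pos _
  have hc1 : c ≤ 1 := by
    rw [hcdef]
    apply Real.exp_le_one_iff.2
    nlinarith
  have hVd : ∀ s, 0 < s →
      HasDerivAt (fun u => V u t) (c * ∫ z, deriv g (s * E z) * E z ∂ν) s := by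
    intro s hs
    refine (((hder s hs).1).const_mul c).congr_of_eventuallyEq ?_
    filter_upwards [eventually_gt_nhds hs] with u hu
    rw [hV u t hu ht]
  have hd1eq : deriv (fun u => V u t)
      =ᶠ[nhds S] fun s => c * ∫ z, deriv g (s * E z) * E z ∂ν := by
    filter_upwards [eventually_gt_nhds hS] with s hs using (hVd s hs).deriv
  have hD2 : deriv (deriv (fun u => V u t)) S
      = c * ∫ z, deriv (deriv g) (S * E z) * E z * E z ∂ν := by
    rw [Filter.EventuallyEq.deriv_eq hd1eq]
    exact (((hder S hS).2.1).const_mul c).deriv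
  -- bound on the second-derivative integral
  have hM0 : 0 ≤ M := le_trans (by positivity) (hM 1 one_pos)
  have hdd : ∀ y > (0:ℝ), |deriv (deriv g) y| ≤ M / y ^ 2 := by
    intro y hy
    rw [le_div_iff₀ (by positivity)]
    calc |deriv (deriv g) y| * y ^ 2 = y ^ 2 * |deriv (deriv g) y| := by ring
      _ ≤ M := hM y hy
  have hb : |∫ z, deriv (deriv g) (S * E z) * E z * E z ∂ν| ≤ M / S ^ 2 := by
    have h := norm_integral_le_of_norm_le (μ := ν) (f := fun z => deriv (deriv g) (S * E z) * E z * E z)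
      (integrable_const (M / S ^ 2)) (Filter.Eventually.of_forall fun z => ?_)
    · rw [integral_const] at h
      simpa [measure_univ, Real.norm_eq_abs] using h
    · have hEz := hEpos z
      have hy0 : 0 < S * E z := mul_pos hS hEz
      calc ‖deriv (deriv g) (S * E z) * E z * E z‖
          = |deriv (deriv g) (S * E z)| * E z * E z := by
            simp [Real.norm_eq_abs, abs_mul, abs_of_pos hEz]
        _ ≤ (M / (S * E z) ^ 2) * E z * E z := by
            gcongr
            exact hdd _ hy0
        _ = M / S ^ 2 := by
            field_simp
  rw [hD2]
  have heq : |S ^ 2 * (c * ∫ z, deriv (deriv g) (S * E z) * E z * E z ∂ν)|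
      = S ^ 2 * (c * |∫ z, deriv (deriv g) (S * E z) * E z * E z ∂ν|) := by
    rw [abs_mul, abs_mul, abs_of_nonneg (by positivity : (0:ℝ) ≤ S ^ 2), abs_of_pos hc0]
  rw [heq]
  calc S ^ 2 * (c * |∫ z, deriv (deriv g) (S * E z) * E z * E z ∂ν|)
      ≤ S ^ 2 * (1 * (M / S ^ 2)) := by
        gcongr
    _ = M := by field_simp
end

section
/- Suppose g : (0,∞) → [0,∞) is C² and sup_{x>0}|g(x) − x g'(x)| < ∞. Let V₀(S,t) = e^{−r(T−t)} E[g(S_T)] with S_T = S e^{σ(Z_T−Z_t)+(r−σ²/2)(T−t)}. Then for all S > 0, t ∈ [0,T], |V₀(S,t) − S ∂V₀/∂S(S,t)| ≤ sup_{x>0}|g(x) − x g'(x)|. -/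
open Real MeasureTheory ProbabilityTheory

lemma aux_integrable_dirac {f : ℝ → ℝ} (hf : Measurable f) (a : ℝ) :
    Integrable f (MeasureTheory.Measure.dirac a) := by
  refine ⟨hf.aestronglyMeasurable, ?_⟩
  simp [HasFiniteIntegral, MeasureTheory.lintegral_dirac]

lemma aux_integrable_exp_gaussian (a : ℝ) (v : NNReal) :
    Integrable (fun z => rexp (a * z)) (gaussianReal 0 v) := by
  by_cases hv : v = 0
  · rw [hv, gaussianReal_zero_var]
    exact aux_integrable_dirac ((measurable_id.const_mul a).exp) 0
  · rw [gaussianReal_of_var_ne_zero _ hv,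
      integrable_withDensity_iff (measurable_gaussianPDF _ _)
        (Filter.Eventually.of_forall fun _ => ENNReal.ofReal_lt_top)]
    have hv' : (0:ℝ) < (v:ℝ) := by positivity
    have heq : (fun x => rexp (a * x) * (gaussianPDF 0 v x).toReal)
        = fun x => ((Real.sqrt (2*π*v))⁻¹ * rexp (a^2*v/2)) *
            rexp (-(2*(v:ℝ))⁻¹ * (x - a*v)^2) := by
      funext x
      rw [gaussianPDF, ENNReal.toReal_ofReal (gaussianPDFReal_nonneg _ _ _), gaussianPDFReal]
      have hexp : -(x - 0) ^ 2 / (2 * (v:ℝ)) + a * x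
          = a ^ 2 * (v:ℝ) / 2 + -(2 * (v:ℝ))⁻¹ * (x - a * (v:ℝ)) ^ 2 := by
        field_simp
        ring
      rw [mul_comm (rexp (a * x)), mul_assoc, ← Real.exp_add, hexp, Real.exp_add, ← mul_assoc]
    rw [heq]
    exact ((integrable_exp_neg_mul_sq (by positivity)).comp_sub_right (a*v)).const_mul _

lemma aux_growth {g : ℝ → ℝ} {M : ℝ} (hg : ContDiffOn ℝ 2 g (Set.Ioi 0))
    (hgnn : ∀ x > 0, 0 ≤ g x) (hM : ∀ x > 0, |g x - x * deriv g x| ≤ M) :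
    ∀ x > 0, g x ≤ (g 1 + M) * x + M := by
  have hM0 : 0 ≤ M := le_trans (abs_nonneg _) (hM 1 one_pos)
  have hgd : ∀ y ∈ Set.Ioi (0:ℝ), HasDerivAt g (deriv g y) y := fun y hy =>
    ((hg.differentiableOn (by norm_num)).differentiableAt (Ioi_mem_nhds hy)).hasDerivAt
  -- φ = g x / x - M / x is monotone, ψ = g x / x + M / x is antitone
  have hφd : ∀ x ∈ Set.Ioi (0:ℝ), HasDerivAt (fun y => g y / y - M / y)
      ((deriv g x * x - g x * 1) / x ^ 2 - (0 * x - M * 1) / x ^ 2) x := fun x hx =>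
    ((hgd x hx).div (hasDerivAt_id x) (ne_of_gt hx)).sub
      ((hasDerivAt_const x M).div (hasDerivAt_id x) (ne_of_gt hx))
  have hψd : ∀ x ∈ Set.Ioi (0:ℝ), HasDerivAt (fun y => g y / y + M / y)
      ((deriv g x * x - g x * 1) / x ^ 2 + (0 * x - M * 1) / x ^ 2) x := fun x hx =>
    ((hgd x hx).div (hasDerivAt_id x) (ne_of_gt hx)).add
      ((hasDerivAt_const x M).div (hasDerivAt_id x) (ne_of_gt hx))
  have hφmono : MonotoneOn (fun y => g y / y - M / y) (Set.Ioi 0) := by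
    refine monotoneOn_of_deriv_nonneg (convex_Ioi 0)
      (fun x hx => (hφd x hx).continuousAt.continuousWithinAt) ?_ ?_
    · rw [interior_Ioi]
      exact fun x hx => (hφd x hx).differentiableAt.differentiableWithinAt
    · rw [interior_Ioi]
      intro x hx
      rw [(hφd x hx).deriv]
      have hx' : (0:ℝ) < x := hx
      have h1 := abs_le.mp (hM x hx')
      have hx2 : (0:ℝ) < x ^ 2 := by positivity
      rw [div_sub_div_same]
      apply div_nonneg _ hx2.le
      nlinarith [h1.1, h1.2]
  have hψanti : AntitoneOn (fun y => g y / y + M / y) (Set.Ioi 0) := by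
    refine antitoneOn_of_deriv_nonpos (convex_Ioi 0)
      (fun x hx => (hψd x hx).continuousAt.continuousWithinAt) ?_ ?_
    · rw [interior_Ioi]
      exact fun x hx => (hψd x hx).differentiableAt.differentiableWithinAt
    · rw [interior_Ioi]
      intro x hx
      rw [(hψd x hx).deriv]
      have hx' : (0:ℝ) < x := hx
      have h1 := abs_le.mp (hM x hx')
      have hx2 : (0:ℝ) < x ^ 2 := by positivity
      rw [← add_div]
      apply div_nonpos_of_nonpos_of_nonneg _ hx2.le
      nlinarith [h1.1, h1.2]
  intro x hx
  have hg1 : 0 ≤ g 1 := hgnn 1 one_pos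
  rcases le_total x 1 with hx1 | hx1
  · have := hφmono (Set.mem_Ioi.mpr hx) (Set.mem_Ioi.mpr one_pos) hx1
    simp only [div_one] at this
    rw [div_sub_div_same, div_le_iff₀ hx] at this
    nlinarith
  · have := hψanti (Set.mem_Ioi.mpr one_pos) (Set.mem_Ioi.mpr hx) hx1
    simp only [div_one] at this
    rw [← add_div, div_le_iff₀ hx] at this
    nlinarith

lemma aux_key {g : ℝ → ℝ} (hg : ContDiffOn ℝ 2 g (Set.Ioi 0))
    (hgnn : ∀ x > 0, 0 ≤ g x) {M : ℝ}
    (hM : ∀ x > 0, |g x - x * deriv g x| ≤ M)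
    (σ c : ℝ) (v : NNReal) {S : ℝ} (hS : 0 < S) :
    HasDerivAt (fun s => ∫ z, g (s * rexp (σ * z + c)) ∂(gaussianReal 0 v))
      (∫ z, rexp (σ * z + c) * deriv g (S * rexp (σ * z + c)) ∂(gaussianReal 0 v)) S ∧
    |(∫ z, g (S * rexp (σ * z + c)) ∂(gaussianReal 0 v)) -
      S * ∫ z, rexp (σ * z + c) * deriv g (S * rexp (σ * z + c)) ∂(gaussianReal 0 v)| ≤ M := by
  set μ := gaussianReal 0 v
  set C := g 1 + M with hCdef
  have hM0 : 0 ≤ M := le_trans (abs_nonneg _) (hM 1 one_pos)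
  have hC0 : 0 ≤ C := add_nonneg (hgnn 1 one_pos) hM0
  have hgrow := aux_growth hg hgnn hM
  have hxg' : ∀ x > 0, |x * deriv g x| ≤ C * x + 2 * M := by
    intro x hx
    have h1 := abs_le.mp (hM x hx)
    have h2 := hgnn x hx
    have h3 := hgrow x hx
    rw [abs_le]
    constructor <;> nlinarith
  have hgd : ∀ y : ℝ, 0 < y → HasDerivAt g (deriv g y) y := fun y hy =>
    ((hg.differentiableOn (by norm_num)).differentiableAt (Ioi_mem_nhds hy)).hasDerivAt
  have hgc : ContinuousOn g (Set.Ioi 0) := hg.continuousOn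
  have hg'c : ContinuousOn (deriv g) (Set.Ioi 0) :=
    hg.continuousOn_deriv_of_isOpen isOpen_Ioi (by norm_num)
  have contE : Continuous (fun z : ℝ => rexp (σ * z + c)) := by fun_prop
  have hIntExp : Integrable (fun z => rexp (σ * z + c)) μ := by
    have h := (aux_integrable_exp_gaussian σ v).const_mul (rexp c)
    apply h.congr
    filter_upwards with z
    rw [Real.exp_add, mul_comm]
  have hmeas : ∀ s : ℝ, 0 < s → AEStronglyMeasurable (fun z => g (s * rexp (σ * z + c))) μ := by
    intro s hs
    exact (hgc.comp_continuous (by fun_prop) fun z =>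
      Set.mem_Ioi.mpr (mul_pos hs (exp_pos _))).aestronglyMeasurable
  have hInt : ∀ s : ℝ, 0 < s → Integrable (fun z => g (s * rexp (σ * z + c))) μ := by
    intro s hs
    refine Integrable.mono' ((hIntExp.const_mul (C * s)).add (integrable_const M))
      (hmeas s hs) (Filter.Eventually.of_forall fun z => ?_)
    have h1 : 0 < s * rexp (σ * z + c) := mul_pos hs (exp_pos _)
    rw [Real.norm_eq_abs, abs_of_nonneg (hgnn _ h1)]
    calc g (s * rexp (σ * z + c)) ≤ C * (s * rexp (σ * z + c)) + M := hgrow _ h1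
      _ = C * s * rexp (σ * z + c) + M := by ring
  obtain ⟨hF'int, hDeriv⟩ := hasDerivAt_integral_of_dominated_loc_of_deriv_le
    (F := fun s z => g (s * rexp (σ * z + c)))
    (F' := fun s z => rexp (σ * z + c) * deriv g (s * rexp (σ * z + c)))
    (x₀ := S) (μ := μ) (bound := fun z => C * rexp (σ * z + c) + 4 * M / S)
    (Metric.ball_mem_nhds S (half_pos hS))
    (by filter_upwards [Ioi_mem_nhds hS] with s hs using hmeas s hs)
    (hInt S hS)
    ((contE.mul ((hg'c.comp_continuous (by fun_prop) fun z =>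
      Set.mem_Ioi.mpr (mul_pos hS (exp_pos _))))).aestronglyMeasurable)
    (Filter.Eventually.of_forall fun z => by
      intro x hx
      rw [Metric.mem_ball, Real.dist_eq, abs_lt] at hx
      have hxpos : 0 < x := by linarith
      have hxhalf : S / 2 < x := by linarith
      set e := rexp (σ * z + c) with he
      have hepos : 0 < e := exp_pos _
      have hy : 0 < x * e := mul_pos hxpos hepos
      have h1 : (x * e) * |deriv g (x * e)| ≤ C * (x * e) + 2 * M := by
        have := hxg' (x * e) hy
        rwa [abs_mul, abs_of_pos hy] at this
      rw [Real.norm_eq_abs, abs_mul, abs_of_pos hepos]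
      have h2 : e * |deriv g (x * e)| = ((x * e) * |deriv g (x * e)|) / x := by
        field_simp
      rw [h2]
      have h3 : ((x * e) * |deriv g (x * e)|) / x ≤ (C * (x * e) + 2 * M) / x :=
        (div_le_div_iff_of_pos_right hxpos).mpr h1
      refine h3.trans ?_
      rw [add_div]
      have h4 : C * (x * e) / x = C * e := by field_simp
      rw [h4]
      have h5 : 2 * M / x ≤ 4 * M / S := by
        rw [div_le_div_iff₀ hxpos hS]
        nlinarith
      linarith)
    ((hIntExp.const_mul C).add (integrable_const _))
    (Filter.Eventually.of_forall fun z => by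
      intro x hx
      rw [Metric.mem_ball, Real.dist_eq, abs_lt] at hx
      have hxpos : 0 < x := by linarith
      have hy : 0 < x * rexp (σ * z + c) := mul_pos hxpos (exp_pos _)
      have h := (hgd _ hy).comp x (hasDerivAt_mul_const (rexp (σ * z + c)))
      simpa [Function.comp_def, mul_comm] using h)
  refine ⟨hDeriv, ?_⟩
  rw [← integral_const_mul, ← integral_sub (hInt S hS) (hF'int.const_mul S),
    ← Real.norm_eq_abs]
  refine (norm_integral_le_of_norm_le (μ := μ) (integrable_const M)
    (Filter.Eventually.of_forall fun z => ?_)).trans ?_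
  · have hy : 0 < S * rexp (σ * z + c) := mul_pos hS (exp_pos _)
    have h := hM _ hy
    rw [Real.norm_eq_abs, ← mul_assoc]
    exact h
  · simp [measure_univ]

/-- |V₀ − S ∂V₀/∂S| is bounded by sup |g − x g'| for the Black-Scholes price. -/
theorem stmt2 (T r σ : ℝ) (hT : 0 < T) (hr : 0 ≤ r) (hσ : 0 < σ)
    (g : ℝ → ℝ) (hg : ContDiffOn ℝ 2 g (Set.Ioi 0)) (hgnn : ∀ x > 0, 0 ≤ g x)
    (M : ℝ) (hM : ∀ x > 0, |g x - x * deriv g x| ≤ M)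
    (V : ℝ → ℝ → ℝ)
    (hV : ∀ S t, 0 < S → t ∈ Set.Icc 0 T →
      V S t = Real.exp (-r * (T - t)) *
        ∫ z, g (S * Real.exp (σ * z + (r - σ ^ 2 / 2) * (T - t)))
          ∂(gaussianReal 0 (Real.toNNReal (T - t)))) :
    ∀ S t, 0 < S → t ∈ Set.Icc 0 T →
      |V S t - S * deriv (fun s => V s t) S| ≤ M := by
  intro S t hS ht
  obtain ⟨hd, hb⟩ := aux_key hg hgnn hM σ ((r - σ ^ 2 / 2) * (T - t)) (Real.toNNReal (T - t)) hS
  set I := ∫ z, g (S * rexp (σ * z + (r - σ ^ 2 / 2) * (T - t)))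
      ∂(gaussianReal 0 (Real.toNNReal (T - t))) with hI
  set D := ∫ z, rexp (σ * z + (r - σ ^ 2 / 2) * (T - t)) *
      deriv g (S * rexp (σ * z + (r - σ ^ 2 / 2) * (T - t)))
      ∂(gaussianReal 0 (Real.toNNReal (T - t))) with hD
  have hderiv : deriv (fun s => V s t) S = rexp (-r * (T - t)) * D := by
    have h1 : (fun s => V s t) =ᶠ[nhds S] fun s => rexp (-r * (T - t)) *
        ∫ z, g (s * rexp (σ * z + (r - σ ^ 2 / 2) * (T - t)))
          ∂(gaussianReal 0 (Real.toNNReal (T - t))) := by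
      filter_upwards [Ioi_mem_nhds hS] with s hs
      exact hV s t hs ht
    rw [h1.deriv_eq, (hd.const_mul (rexp (-r * (T - t)))).deriv]
  rw [hV S t hS ht, hderiv, ← hI]
  have heq : rexp (-r * (T - t)) * I - S * (rexp (-r * (T - t)) * D)
      = rexp (-r * (T - t)) * (I - S * D) := by ring
  rw [heq, abs_mul, abs_of_pos (exp_pos _)]
  have hexp : rexp (-r * (T - t)) ≤ 1 := by
    rw [← Real.exp_zero]
    apply Real.exp_le_exp.mpr
    nlinarith [ht.2]
  calc rexp (-r * (T - t)) * |I - S * D| ≤ 1 * M :=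
      mul_le_mul hexp hb (abs_nonneg _) zero_le_one
    _ = M := one_mul M
end
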